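/- (Symmetric Cauchy case) For a > 0, t > 0 and L > 0, with Cauchy transition density k_t(z) = t/(π(z² + t²)) and q_j(ε) := ∫₀^L k_t(y − a(j−ε)) dy, the number variance of the infinite system of independent symmetric Cauchy processes started from the equispaced-averaged configuration satisfies ∑_{j∈ℤ} ∫₀¹ q_j(ε)(1 − q_j(ε)) dε = (L/a)[1 − (2/π) arctan(L/(2t))] + (2t/(aπ)) log(1 + (L/(2t))²); moreover this expression divided by log L converges to 4t/(aπ) as L → ∞. -/

import Mathlib

open MeasureTheory Filter Set

/-- Symmetric Cauchy transition density at time `t`. -/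
noncomputable def cauchyPDF (t z : ℝ) : ℝ :=
  t / (Real.pi * (z ^ 2 + t ^ 2))

/-- Probability that the `j`-th Cauchy particle, started from `a (j - ε)`,
lies in `[0, L]` at time `t`. -/
noncomputable def hitProb (t a L : ℝ) (j : ℤ) (ε : ℝ) : ℝ :=
  ∫ y in (0:ℝ)..L, cauchyPDF t (y - a * ((j : ℝ) - ε))

open Real

/-- `x arctan(x/s) - (s/2) log(1+(x/s)^2)`, an antiderivative of `arctan (x/s)`. -/
noncomputable def Wa (s x : ℝ) : ℝ := x * arctan (x / s) - (s / 2) * log (1 + (x / s) ^ 2)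

/-- closed form of the hit probability -/
noncomputable def Qf (t L u : ℝ) : ℝ := (arctan ((L - u) / t) + arctan (u / t)) / π

lemma cauchyPDF_nonneg {t : ℝ} (ht : 0 < t) (z : ℝ) : 0 ≤ cauchyPDF t z := by
  unfold cauchyPDF; positivity

lemma cauchyPDF_pos {t : ℝ} (ht : 0 < t) (z : ℝ) : 0 < cauchyPDF t z := by
  unfold cauchyPDF
  have : 0 < z ^ 2 + t ^ 2 := by positivity
  positivity

lemma continuous_cauchyPDF {t : ℝ} (ht : 0 < t) (c : ℝ) :
    Continuous fun y : ℝ => cauchyPDF t (y - c) := by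
  unfold cauchyPDF
  refine continuous_const.div (by continuity) fun y => ?_
  have : 0 < (y - c) ^ 2 + t ^ 2 := by positivity
  positivity

lemma hasDerivAt_arctan_aff {t : ℝ} (ht : t ≠ 0) (c x : ℝ) :
    HasDerivAt (fun x => arctan ((x - c) / t)) ((1 / (1 + ((x - c) / t) ^ 2)) * (1 / t)) x := by
  have h1 : HasDerivAt (fun x : ℝ => (x - c) / t) (1 / t) x := by
    simpa using ((hasDerivAt_id x).sub_const c).div_const t
  exact (Real.hasDerivAt_arctan _).comp x h1

lemma hasDerivAt_cauchyAnti {t : ℝ} (ht : 0 < t) (c y : ℝ) :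
    HasDerivAt (fun y => arctan ((y - c) / t) / π) (cauchyPDF t (y - c)) y := by
  have h := (hasDerivAt_arctan_aff ht.ne' c y).div_const π
  refine h.congr_deriv ?_
  unfold cauchyPDF
  have h1 : 0 < (y - c) ^ 2 + t ^ 2 := by positivity
  have hπ := Real.pi_pos
  field_simp
  ring

/-- the interval integral of the Cauchy kernel -/
lemma integral_Ioc_cauchy {t L : ℝ} (ht : 0 < t) (hL : 0 ≤ L) (c : ℝ) :
    ∫ y in Ioc (0:ℝ) L, cauchyPDF t (y - c) = Qf t L c := by
  rw [← intervalIntegral.integral_of_le hL]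
  rw [intervalIntegral.integral_eq_sub_of_hasDerivAt
    (f := fun y => arctan ((y - c) / t) / π) (fun x _ => hasDerivAt_cauchyAnti ht c x)
    (((continuous_cauchyPDF ht c)).intervalIntegrable 0 L)]
  unfold Qf
  rw [zero_sub, neg_div, Real.arctan_neg]
  ring

lemma Qf_nonneg {t L : ℝ} (ht : 0 < t) (hL : 0 ≤ L) (u : ℝ) : 0 ≤ Qf t L u := by
  unfold Qf
  have h : arctan ((0 - u) / t) ≤ arctan ((L - u) / t) := by
    apply Real.arctan_strictMono.monotone
    exact div_le_div_of_nonneg_right (by linarith) ht.le |>.trans_eq rfl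
  rw [zero_sub, neg_div, Real.arctan_neg] at h
  have hπ := Real.pi_pos
  apply div_nonneg ?_ hπ.le
  linarith


lemma Qf_le_one {t L : ℝ} (ht : 0 < t) (u : ℝ) : Qf t L u ≤ 1 := by
  unfold Qf
  have h1 := Real.arctan_lt_pi_div_two ((L - u) / t)
  have h2 := Real.arctan_lt_pi_div_two (u / t)
  have hπ := Real.pi_pos
  rw [div_le_one hπ]
  linarith

lemma continuous_Qf {t : ℝ} (ht : 0 < t) (L : ℝ) : Continuous (Qf t L) := by
  unfold Qf
  apply Continuous.div_const
  exact (Real.continuous_arctan.comp (by continuity)).add (Real.continuous_arctan.comp (by continuity))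


/-- ratio of shifted quadratics tends to 1 at +infinity -/
lemma tendsto_ratio_atTop (p q c : ℝ) (hc : 0 < c) :
    Tendsto (fun u : ℝ => ((u - p) ^ 2 + c) / ((u - q) ^ 2 + c)) atTop (nhds 1) := by
  have key : Tendsto (fun v : ℝ => ((1 - p * v) ^ 2 + c * v ^ 2) / ((1 - q * v) ^ 2 + c * v ^ 2))
      (nhds 0) (nhds 1) := by
    have : ContinuousAt (fun v : ℝ => ((1 - p * v) ^ 2 + c * v ^ 2) / ((1 - q * v) ^ 2 + c * v ^ 2)) 0 := by
      apply ContinuousAt.div (by fun_prop) (by fun_prop)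
      norm_num
    simpa using this.tendsto
  have comp := key.comp tendsto_inv_atTop_zero
  apply comp.congr'
  filter_upwards [eventually_gt_atTop 0] with u hu
  have hu0 : u ≠ 0 := hu.ne'
  have hden : (u - q) ^ 2 + c ≠ 0 := by positivity
  have hden2 : (1 - q * u⁻¹) ^ 2 + c * (u⁻¹) ^ 2 ≠ 0 := by
    have h1 : (1 - q * u⁻¹) ^ 2 + c * (u⁻¹) ^ 2 > 0 := by positivity
    exact h1.ne'
  show ((1 - p * u⁻¹) ^ 2 + c * (u⁻¹) ^ 2) / ((1 - q * u⁻¹) ^ 2 + c * (u⁻¹) ^ 2)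
      = ((u - p) ^ 2 + c) / ((u - q) ^ 2 + c)
  rw [div_eq_div_iff hden2 hden]
  field_simp

lemma tendsto_ratio_atBot (p q c : ℝ) (hc : 0 < c) :
    Tendsto (fun u : ℝ => ((u - p) ^ 2 + c) / ((u - q) ^ 2 + c)) atBot (nhds 1) := by
  have := (tendsto_ratio_atTop (-p) (-q) c hc).comp tendsto_neg_atBot_atTop
  apply this.congr
  intro u
  simp only [Function.comp_apply]
  ring_nf

/-- log of ratio of shifted quadratics tends to 0 -/
lemma tendsto_logdiff_atTop (p q c : ℝ) (hc : 0 < c) :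
    Tendsto (fun u : ℝ => log ((u - p) ^ 2 + c) - log ((u - q) ^ 2 + c)) atTop (nhds 0) := by
  have h1 : ∀ u : ℝ, log ((u - p) ^ 2 + c) - log ((u - q) ^ 2 + c)
      = log (((u - p) ^ 2 + c) / ((u - q) ^ 2 + c)) := by
    intro u
    rw [Real.log_div (by positivity) (by positivity)]
  simp_rw [h1]
  have := (Real.continuousAt_log (one_ne_zero)).tendsto.comp (tendsto_ratio_atTop p q c hc)
  simpa [Function.comp_def] using this

lemma tendsto_logdiff_atBot (p q c : ℝ) (hc : 0 < c) :
    Tendsto (fun u : ℝ => log ((u - p) ^ 2 + c) - log ((u - q) ^ 2 + c)) atBot (nhds 0) := by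
  have h1 : ∀ u : ℝ, log ((u - p) ^ 2 + c) - log ((u - q) ^ 2 + c)
      = log (((u - p) ^ 2 + c) / ((u - q) ^ 2 + c)) := by
    intro u
    rw [Real.log_div (by positivity) (by positivity)]
  simp_rw [h1]
  have := (Real.continuousAt_log (one_ne_zero)).tendsto.comp (tendsto_ratio_atBot p q c hc)
  simpa [Function.comp_def] using this

/-- arctan((u-c)/t) → π/2 at +∞ -/
lemma tendsto_arctan_aff_atTop {t : ℝ} (ht : 0 < t) (c : ℝ) :
    Tendsto (fun u : ℝ => arctan ((u - c) / t)) atTop (nhds (π / 2)) := by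
  have h1 : Tendsto (fun u : ℝ => (u - c) / t) atTop atTop := by
    apply Tendsto.atTop_div_const ht
    apply tendsto_atTop_add_const_right _ (-c) tendsto_id |>.congr
    intro x; simp [sub_eq_add_neg, add_comm]
  exact (Real.tendsto_arctan_atTop.mono_right nhdsWithin_le_nhds).comp h1

lemma tendsto_arctan_aff_atBot {t : ℝ} (ht : 0 < t) (c : ℝ) :
    Tendsto (fun u : ℝ => arctan ((u - c) / t)) atBot (nhds (-(π / 2))) := by
  have h1 : Tendsto (fun u : ℝ => (u - c) / t) atBot atBot := by
    apply Tendsto.atBot_div_const ht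
    apply tendsto_atBot_add_const_right _ (-c) tendsto_id |>.congr
    intro x; simp [sub_eq_add_neg, add_comm]
  exact (Real.tendsto_arctan_atBot.mono_right nhdsWithin_le_nhds).comp h1

/-- u * arctan (b/u) → b at +infinity -/
lemma tendsto_mul_arctan_atTop (b : ℝ) :
    Tendsto (fun u : ℝ => u * arctan (b / u)) atTop (nhds b) := by
  rcases eq_or_ne b 0 with rfl | hb
  · simpa using tendsto_const_nhds (α := ℝ) (x := (0:ℝ)) (f := atTop)
  · have hda : HasDerivAt arctan 1 0 := by simpa using Real.hasDerivAt_arctan 0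
    have hslope : Tendsto (slope arctan 0) (nhdsWithin 0 {(0:ℝ)}ᶜ) (nhds 1) :=
      hasDerivAt_iff_tendsto_slope.mp hda
    have hcomp : Tendsto (fun u : ℝ => b / u) atTop (nhdsWithin 0 {(0:ℝ)}ᶜ) := by
      rw [tendsto_nhdsWithin_iff]
      constructor
      · simpa [div_eq_mul_inv] using tendsto_inv_atTop_zero.const_mul b
      · filter_upwards [eventually_gt_atTop 0] with u hu
        exact div_ne_zero hb hu.ne'
    have h1 : Tendsto (fun u : ℝ => b * slope arctan 0 (b / u)) atTop (nhds (b * 1)) :=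
      (hslope.comp hcomp).const_mul b
    rw [mul_one] at h1
    apply h1.congr'
    filter_upwards [eventually_gt_atTop 0] with u hu
    simp only [slope_def_field, Real.arctan_zero, sub_zero]
    field_simp

/-- the difference of antiderivatives `Wa t u - Wa t (u - L)` tends to `L * π/2` at `+∞`. -/
lemma tendsto_Wa_diff_atTop {t : ℝ} (ht : 0 < t) (L : ℝ) :
    Tendsto (fun u : ℝ => Wa t u - Wa t (u - L)) atTop (nhds (L * (π / 2))) := by
  have hlog : Tendsto (fun u : ℝ => log ((u - 0) ^ 2 + t ^ 2) - log ((u - L) ^ 2 + t ^ 2))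
      atTop (nhds 0) := tendsto_logdiff_atTop 0 L (t ^ 2) (by positivity)
  have h1 : Tendsto (fun u : ℝ => u * arctan (t / u)) atTop (nhds t) := tendsto_mul_arctan_atTop t
  have h2 : Tendsto (fun u : ℝ => (u - L) * arctan (t / (u - L))) atTop (nhds t) :=
    h1.comp (tendsto_atTop_add_const_right _ (-L) tendsto_id) |>.congr (by
      intro u; simp [sub_eq_add_neg])
  have key : Tendsto (fun u : ℝ =>
      L * (π / 2) - u * arctan (t / u) + (u - L) * arctan (t / (u - L))
        - (t / 2) * (log ((u - 0) ^ 2 + t ^ 2) - log ((u - L) ^ 2 + t ^ 2)))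
      atTop (nhds (L * (π / 2) - t + t - (t / 2) * 0)) := by
    exact ((((tendsto_const_nhds).sub h1).add h2).sub (hlog.const_mul (t / 2)))
  have key' : Tendsto (fun u : ℝ =>
      L * (π / 2) - u * arctan (t / u) + (u - L) * arctan (t / (u - L))
        - (t / 2) * (log ((u - 0) ^ 2 + t ^ 2) - log ((u - L) ^ 2 + t ^ 2)))
      atTop (nhds (L * (π / 2))) := by
    convert key using 2; ring
  apply key'.congr'
  filter_upwards [eventually_gt_atTop (max 0 L)] with u hu
  have hu0 : 0 < u := lt_of_le_of_lt (le_max_left 0 L) hu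
  have huL : 0 < u - L := by have := lt_of_le_of_lt (le_max_right 0 L) hu; linarith
  have ha1 : arctan (u / t) = π / 2 - arctan (t / u) := by
    have h := Real.arctan_inv_of_pos (show 0 < u / t from by positivity)
    rw [show (u / t)⁻¹ = t / u by rw [inv_div]] at h
    linarith [h]
  have ha2 : arctan ((u - L) / t) = π / 2 - arctan (t / (u - L)) := by
    have h := Real.arctan_inv_of_pos (show 0 < (u - L) / t from by positivity)
    rw [show ((u - L) / t)⁻¹ = t / (u - L) by rw [inv_div]] at h
    linarith [h]
  have hl1 : log (1 + (u / t) ^ 2) = log ((u - 0) ^ 2 + t ^ 2) - log (t ^ 2) := by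
    rw [show 1 + (u / t) ^ 2 = ((u - 0) ^ 2 + t ^ 2) / t ^ 2 by field_simp; ring,
      Real.log_div (by positivity) (by positivity)]
  have hl2 : log (1 + ((u - L) / t) ^ 2) = log ((u - L) ^ 2 + t ^ 2) - log (t ^ 2) := by
    rw [show 1 + ((u - L) / t) ^ 2 = ((u - L) ^ 2 + t ^ 2) / t ^ 2 by field_simp; ring,
      Real.log_div (by positivity) (by positivity)]
  show L * (π / 2) - u * arctan (t / u) + (u - L) * arctan (t / (u - L))
        - (t / 2) * (log ((u - 0) ^ 2 + t ^ 2) - log ((u - L) ^ 2 + t ^ 2))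
      = Wa t u - Wa t (u - L)
  unfold Wa
  rw [ha1, ha2, hl1, hl2]
  ring

lemma Wa_even {t : ℝ} (x : ℝ) : Wa t (-x) = Wa t x := by
  unfold Wa
  rw [show -x / t = -(x / t) by ring, Real.arctan_neg]
  ring_nf

lemma tendsto_Wa_diff_atBot {t : ℝ} (ht : 0 < t) (L : ℝ) :
    Tendsto (fun u : ℝ => Wa t u - Wa t (u - L)) atBot (nhds (-(L * (π / 2)))) := by
  have h1 : Tendsto (fun u : ℝ => -(Wa t (u + L) - Wa t (u + L - L))) atTop
      (nhds (-(L * (π / 2)))) :=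
    ((tendsto_Wa_diff_atTop ht L).comp (tendsto_atTop_add_const_right _ L tendsto_id)).neg
  have h2 := h1.comp tendsto_neg_atBot_atTop
  apply h2.congr
  intro u
  simp only [Function.comp_apply, id_eq]
  have e1 : Wa t (-u) = Wa t u := Wa_even u
  have e2 : Wa t (-u + L) = Wa t (u - L) := by
    rw [show (-u + L : ℝ) = -(u - L) by ring, Wa_even]
  rw [show (-u + L - L : ℝ) = -u by ring]
  rw [e1, e2]
  ring

/-- Whole-line FTC for nonnegative integrands. -/
theorem line_ftc {F Φ : ℝ → ℝ} {b c : ℝ} (hd : ∀ x, HasDerivAt Φ (F x) x) (h0 : ∀ x, 0 ≤ F x)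
    (hbot : Tendsto Φ atBot (nhds c)) (htop : Tendsto Φ atTop (nhds b)) :
    Integrable F ∧ ∫ x, F x = b - c := by
  have I1 : IntegrableOn F (Ioi 0) :=
    integrableOn_Ioi_deriv_of_nonneg' (fun x _ => hd x) (fun x _ => h0 x) htop
  -- reflection for the left half
  have hdneg : ∀ x ∈ Ici (0:ℝ), HasDerivAt (fun x => -Φ (-x)) (F (-x)) x := by
    intro x _
    have h1 : HasDerivAt (fun x : ℝ => Φ (-x)) (F (-x) * (-1)) x :=
      (hd (-x)).comp x (hasDerivAt_neg x)
    exact h1.neg.congr_deriv (by ring)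
  have htneg : Tendsto (fun x => -Φ (-x)) atTop (nhds (-c)) :=
    (hbot.comp tendsto_neg_atTop_atBot).neg
  have I2 : IntegrableOn (fun x => F (-x)) (Ioi 0) :=
    integrableOn_Ioi_deriv_of_nonneg' hdneg (fun x _ => h0 _) htneg
  have A : MeasurableEmbedding (fun x : ℝ => -x) :=
    (Homeomorph.neg ℝ).isClosedEmbedding.measurableEmbedding
  have I3 : IntegrableOn F (Iio 0) := by
    have := (MeasurePreserving.integrableOn_comp_preimage
      (Measure.measurePreserving_neg (volume : Measure ℝ)) A
      (f := F) (s := Iio (0:ℝ))).mpr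
    have h := (MeasurePreserving.integrableOn_comp_preimage
      (Measure.measurePreserving_neg (volume : Measure ℝ)) A
      (f := F) (s := Iio (0:ℝ))).mp
    apply h
    have : (fun x : ℝ => -x) ⁻¹' (Iio 0) = Ioi 0 := by
      ext x; simp
    rw [this]
    exact I2.congr_fun (fun x _ => rfl) measurableSet_Ioi |>.mono_set (by simp)
  have I4 : IntegrableOn F (Iic 0) := Iff.mpr integrableOn_Iic_iff_integrableOn_Iio I3
  have Int : Integrable F := by
    have := I4.union I1
    rwa [Iic_union_Ioi, integrableOn_univ] at this
  refine ⟨Int, ?_⟩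
  have v1 : ∫ x in Ioi (0:ℝ), F x = b - Φ 0 :=
    integral_Ioi_of_hasDerivAt_of_nonneg' (fun x _ => hd x) (fun x _ => h0 x) htop
  have v2 : ∫ x in Iic (0:ℝ), F x = Φ 0 - c :=
    integral_Iic_of_hasDerivAt_of_tendsto' (fun x _ => hd x) I4 hbot
  rw [← intervalIntegral.integral_Iic_add_Ioi I4 I1, v1, v2]
  ring

lemma hasDerivAt_Wa {s : ℝ} (hs : 0 < s) (x : ℝ) :
    HasDerivAt (Wa s) (arctan (x / s)) x := by
  have hid : HasDerivAt (fun x : ℝ => x / s) (1 / s) x := by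
    simpa using (hasDerivAt_id x).div_const s
  have harct : HasDerivAt (fun x : ℝ => arctan (x / s)) ((1 / (1 + (x / s) ^ 2)) * (1 / s)) x :=
    (Real.hasDerivAt_arctan _).comp x hid
  have h1 : HasDerivAt (fun x : ℝ => x * arctan (x / s))
      (1 * arctan (x / s) + x * ((1 / (1 + (x / s) ^ 2)) * (1 / s))) x :=
    (hasDerivAt_id x).mul harct
  have hg : HasDerivAt (fun x : ℝ => 1 + (x / s) ^ 2) ((2 * (x / s) ^ 1) * (1 / s)) x := by
    exact (hid.pow 2).const_add 1 |>.congr_deriv (by ring)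
  have hlog : HasDerivAt (fun x : ℝ => log (1 + (x / s) ^ 2))
      ((2 * (x / s) ^ 1) * (1 / s) / (1 + (x / s) ^ 2)) x := by
    have hne : (1 : ℝ) + (x / s) ^ 2 ≠ 0 := by positivity
    refine ((Real.hasDerivAt_log hne).comp x hg).congr_deriv ?_
    ring
  have := h1.sub ((hlog.const_mul (s / 2)))
  have hne : (1 : ℝ) + (x / s) ^ 2 ≠ 0 := by positivity
  unfold Wa
  refine this.congr_deriv ?_
  field_simp
  ring

lemma hasDerivAt_PhiQ {t : ℝ} (ht : 0 < t) (L u : ℝ) :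
    HasDerivAt (fun u : ℝ => (Wa t u - Wa t (u - L)) / π) (Qf t L u) u := by
  have h1 : HasDerivAt (fun u : ℝ => Wa t (u - L)) (arctan ((u - L) / t)) u := by
    have := (hasDerivAt_Wa ht (u - L)).comp u ((hasDerivAt_id u).sub_const L)
    simpa [Function.comp_def] using this
  have h2 := ((hasDerivAt_Wa ht u).sub h1).div_const π
  refine h2.congr_deriv ?_
  unfold Qf
  rw [show (L - u) / t = -((u - L) / t) by ring, Real.arctan_neg]
  ring

lemma integrable_Qf {t L : ℝ} (ht : 0 < t) (hL : 0 ≤ L) :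
    Integrable (Qf t L) ∧ ∫ u, Qf t L u = L := by
  have hπ := Real.pi_pos
  have h := line_ftc (F := Qf t L) (Φ := fun u : ℝ => (Wa t u - Wa t (u - L)) / π)
    (fun u => hasDerivAt_PhiQ ht L u) (Qf_nonneg ht hL)
    (c := -(L * (π / 2)) / π) (b := (L * (π / 2)) / π)
    ((tendsto_Wa_diff_atBot ht L).div_const π) ((tendsto_Wa_diff_atTop ht L).div_const π)
  refine ⟨h.1, h.2.trans ?_⟩
  field_simp
  ring

lemma hasDerivAt_logquad {t : ℝ} (ht : 0 < t) (c u : ℝ) :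
    HasDerivAt (fun u : ℝ => log ((u - c) ^ 2 + t ^ 2))
      ((2 * (u - c)) / ((u - c) ^ 2 + t ^ 2)) u := by
  have hg : HasDerivAt (fun u : ℝ => (u - c) ^ 2 + t ^ 2) (2 * (u - c)) u := by
    have := (((hasDerivAt_id u).sub_const c).pow 2).add_const (t ^ 2)
    simpa using this
  have hne : (u - c) ^ 2 + t ^ 2 ≠ 0 := by positivity
  refine ((Real.hasDerivAt_log hne).comp u hg).congr_deriv ?_
  ring


lemma conv_cauchy' {t d : ℝ} (ht : 0 < t) (hd0 : d ≠ 0) (y' : ℝ) :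
    Integrable (fun u => cauchyPDF t (y' + d - u) * cauchyPDF t (y' - u)) ∧
    ∫ u, cauchyPDF t (y' + d - u) * cauchyPDF t (y' - u) = cauchyPDF (2 * t) d := by
  have hq : d ^ 2 + 4 * t ^ 2 ≠ 0 := by positivity
  set A : ℝ := 2 / (d * (d ^ 2 + 4 * t ^ 2)) with hA
  set B : ℝ := 1 / (d ^ 2 + 4 * t ^ 2) with hB
  have hπ := Real.pi_pos
  set Φ : ℝ → ℝ := fun u => (t ^ 2 / π ^ 2) *
    ((A / 2) * (log ((u - y') ^ 2 + t ^ 2) - log ((u - (y' + d)) ^ 2 + t ^ 2))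
      + (B / t) * (arctan ((u - y') / t) + arctan ((u - (y' + d)) / t))) with hΦ
  have hderiv : ∀ u, HasDerivAt Φ (cauchyPDF t (y' + d - u) * cauchyPDF t (y' - u)) u := by
    intro u
    have h1 := (hasDerivAt_logquad ht y' u).sub (hasDerivAt_logquad ht (y' + d) u)
    have h2 := (hasDerivAt_arctan_aff ht.ne' y' u).add (hasDerivAt_arctan_aff ht.ne' (y' + d) u)
    have h3 := ((h1.const_mul (A / 2)).add (h2.const_mul (B / t))).const_mul (t ^ 2 / π ^ 2)
    refine h3.congr_deriv ?_
    unfold cauchyPDF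
    have e1 : (u - y') ^ 2 + t ^ 2 ≠ 0 := by positivity
    have e2 : (u - (y' + d)) ^ 2 + t ^ 2 ≠ 0 := by positivity
    have e3 : (1 : ℝ) + ((u - y') / t) ^ 2 ≠ 0 := by positivity
    have e4 : (1 : ℝ) + ((u - (y' + d)) / t) ^ 2 ≠ 0 := by positivity
    have e5 : (y' + d - u) ^ 2 + t ^ 2 ≠ 0 := by positivity
    have e6 : (y' - u) ^ 2 + t ^ 2 ≠ 0 := by positivity
    rw [hA, hB]
    field_simp
    ring
  have hnn : ∀ u, 0 ≤ cauchyPDF t (y' + d - u) * cauchyPDF t (y' - u) := fun u =>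
    mul_nonneg (cauchyPDF_nonneg ht _) (cauchyPDF_nonneg ht _)
  have htop : Tendsto Φ atTop
      (nhds ((t ^ 2 / π ^ 2) * ((A / 2) * 0 + (B / t) * (π / 2 + π / 2)))) := by
    apply Tendsto.const_mul
    exact ((tendsto_logdiff_atTop y' (y' + d) (t ^ 2) (by positivity)).const_mul (A / 2)).add
      (((tendsto_arctan_aff_atTop ht y').add (tendsto_arctan_aff_atTop ht (y' + d))).const_mul (B / t))
  have hbot : Tendsto Φ atBot
      (nhds ((t ^ 2 / π ^ 2) * ((A / 2) * 0 + (B / t) * (-(π / 2) + -(π / 2))))) := by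
    apply Tendsto.const_mul
    exact ((tendsto_logdiff_atBot y' (y' + d) (t ^ 2) (by positivity)).const_mul (A / 2)).add
      (((tendsto_arctan_aff_atBot ht y').add (tendsto_arctan_aff_atBot ht (y' + d))).const_mul (B / t))
  have h := line_ftc hderiv hnn hbot htop
  refine ⟨h.1, h.2.trans ?_⟩
  unfold cauchyPDF
  rw [hB]
  have hden : π * (d ^ 2 + (2 * t) ^ 2) ≠ 0 := by positivity
  field_simp
  ring

/-- Chapman–Kolmogorov for the Cauchy kernel (off-diagonal). -/
lemma conv_cauchy {t : ℝ} (ht : 0 < t) {y y' : ℝ} (hne : y ≠ y') :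
    Integrable (fun u => cauchyPDF t (y - u) * cauchyPDF t (y' - u)) ∧
    ∫ u, cauchyPDF t (y - u) * cauchyPDF t (y' - u) = cauchyPDF (2 * t) (y - y') := by
  have h := conv_cauchy' ht (sub_ne_zero.mpr hne) y'
  rw [show y' + (y - y') = y by ring] at h
  exact h

section Fubini

lemma continuous_cauchyPDF2 {t : ℝ} (ht : 0 < t) :
    Continuous (fun p : ℝ × ℝ => cauchyPDF t (p.2 - p.1)) := by
  unfold cauchyPDF
  refine continuous_const.div (by fun_prop) fun p => ?_
  have : (0:ℝ) < (p.2 - p.1) ^ 2 + t ^ 2 := by positivity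
  positivity

lemma cauchyPDF_even (t z : ℝ) : cauchyPDF t (-z) = cauchyPDF t z := by
  unfold cauchyPDF; ring_nf

lemma integral_Qf_sq {t L : ℝ} (ht : 0 < t) (hL : 0 < L) :
    ∫ u, (Qf t L u) ^ 2 = ∫ y in Ioc (0:ℝ) L, Qf (2 * t) L y := by
  classical
  set μ : Measure ℝ := volume.restrict (Ioc (0:ℝ) L) with hμ
  have hcont2 := continuous_cauchyPDF2 ht
  have mk : Measurable fun p : ℝ × ℝ => ENNReal.ofReal (cauchyPDF t (p.2 - p.1)) :=
    hcont2.measurable.ennreal_ofReal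
  have hk_cont : ∀ u : ℝ, Continuous (fun y => cauchyPDF t (y - u)) :=
    fun u => continuous_cauchyPDF ht u
  have hku_cont : ∀ y : ℝ, Continuous (fun u => cauchyPDF t (y - u)) := fun y =>
    hcont2.comp (continuous_id.prodMk continuous_const)
  have mky : ∀ u : ℝ, Measurable fun y : ℝ => ENNReal.ofReal (cauchyPDF t (y - u)) :=
    fun u => ((hk_cont u).measurable).ennreal_ofReal
  have mku : ∀ y : ℝ, Measurable fun u : ℝ => ENNReal.ofReal (cauchyPDF t (y - u)) :=
    fun y => ((hku_cont y).measurable).ennreal_ofReal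
  have hk_int : ∀ u : ℝ, Integrable (fun y => cauchyPDF t (y - u)) μ :=
    fun u => (hk_cont u).integrableOn_Ioc
  have hQ : ∀ u : ℝ, Qf t L u = ∫ y, cauchyPDF t (y - u) ∂μ :=
    fun u => (integral_Ioc_cauchy ht hL.le u).symm
  set ℓ : ℝ → ENNReal := fun u => ∫⁻ y, ENNReal.ofReal (cauchyPDF t (y - u)) ∂μ with hℓ
  have hℓ_eq : ∀ u, ℓ u = ENNReal.ofReal (Qf t L u) := by
    intro u
    rw [hQ u]
    exact (ofReal_integral_eq_lintegral_ofReal (hk_int u)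
      (Filter.Eventually.of_forall fun y => cauchyPDF_nonneg ht _)).symm
  have hℓ_meas : Measurable ℓ := by
    exact Measurable.lintegral_prod_right
      (f := fun u y => ENNReal.ofReal (cauchyPDF t (y - u))) mk
  -- step 1: pointwise identity
  have step1 : ∀ u : ℝ, ENNReal.ofReal (Qf t L u ^ 2)
      = ∫⁻ y, ENNReal.ofReal (cauchyPDF t (y - u)) * ℓ u ∂μ := by
    intro u
    have h0 : 0 ≤ Qf t L u := Qf_nonneg ht hL.le u
    rw [sq, ENNReal.ofReal_mul h0, ← hℓ_eq u]
    rw [lintegral_mul_const'' (ℓ u) (mky u).aemeasurable]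
  -- step 2: real integral as lintegral
  have hQcont : Continuous (Qf t L) := continuous_Qf ht L
  have step2 : ∫ u, (Qf t L u) ^ 2 = (∫⁻ u, ENNReal.ofReal (Qf t L u ^ 2)).toReal := by
    apply integral_eq_lintegral_of_nonneg_ae
    · exact Filter.Eventually.of_forall fun u => by positivity
    · exact (hQcont.pow 2).aestronglyMeasurable
  -- step 3: swap u with y
  have swap1 : ∫⁻ u, ∫⁻ y, ENNReal.ofReal (cauchyPDF t (y - u)) * ℓ u ∂μ
      = ∫⁻ y, (∫⁻ u, ENNReal.ofReal (cauchyPDF t (y - u)) * ℓ u) ∂μ := by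
    apply lintegral_lintegral_swap
    exact (show Measurable fun p : ℝ × ℝ => ENNReal.ofReal (cauchyPDF t (p.2 - p.1)) * ℓ p.1
      from mk.mul (hℓ_meas.comp measurable_fst)).aemeasurable
  -- step 4: for fixed y, expand ℓ u and swap u with y'
  have step4 : ∀ y : ℝ, ∫⁻ u, ENNReal.ofReal (cauchyPDF t (y - u)) * ℓ u
      = ∫⁻ y', ∫⁻ u, ENNReal.ofReal (cauchyPDF t (y - u))
          * ENNReal.ofReal (cauchyPDF t (y' - u)) ∂(volume) ∂μ := by
    intro y
    have e1 : ∀ u : ℝ, ENNReal.ofReal (cauchyPDF t (y - u)) * ℓ u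
        = ∫⁻ y', ENNReal.ofReal (cauchyPDF t (y - u))
            * ENNReal.ofReal (cauchyPDF t (y' - u)) ∂μ :=
      fun u => (lintegral_const_mul'' _ (mky u).aemeasurable).symm
    simp_rw [e1]
    apply lintegral_lintegral_swap
    exact (show Measurable fun p : ℝ × ℝ => ENNReal.ofReal (cauchyPDF t (y - p.1))
        * ENNReal.ofReal (cauchyPDF t (p.2 - p.1))
      from ((mku y).comp measurable_fst).mul mk).aemeasurable
  -- step 5: convolution identity a.e.
  have step5 : ∀ y : ℝ, (∫⁻ y', ∫⁻ u, ENNReal.ofReal (cauchyPDF t (y - u))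
          * ENNReal.ofReal (cauchyPDF t (y' - u)) ∂(volume) ∂μ)
      = ∫⁻ y', ENNReal.ofReal (cauchyPDF (2 * t) (y - y')) ∂μ := by
    intro y
    apply lintegral_congr_ae
    have hae : ∀ᵐ y' ∂μ, y' ≠ y :=
      ae_restrict_of_ae (by rw [ae_iff]; simpa using measure_singleton y)
    filter_upwards [hae] with y' hy'
    have hconv := conv_cauchy ht (show y ≠ y' from fun h => hy' h.symm)
    have e2 : ∀ u : ℝ, ENNReal.ofReal (cauchyPDF t (y - u)) * ENNReal.ofReal (cauchyPDF t (y' - u))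
        = ENNReal.ofReal (cauchyPDF t (y - u) * cauchyPDF t (y' - u)) :=
      fun u => (ENNReal.ofReal_mul (cauchyPDF_nonneg ht _)).symm
    simp_rw [e2]
    rw [← ofReal_integral_eq_lintegral_ofReal hconv.1 (Filter.Eventually.of_forall fun u =>
      mul_nonneg (cauchyPDF_nonneg ht _) (cauchyPDF_nonneg ht _))]
    rw [hconv.2]
  -- step 6: evaluate the remaining kernel integral
  have h2t : 0 < 2 * t := by linarith
  have step6 : ∀ y : ℝ, (∫⁻ y', ENNReal.ofReal (cauchyPDF (2 * t) (y - y')) ∂μ)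
      = ENNReal.ofReal (Qf (2 * t) L y) := by
    intro y
    have heven : ∀ y' : ℝ, cauchyPDF (2 * t) (y - y') = cauchyPDF (2 * t) (y' - y) := by
      intro y'
      rw [show y - y' = -(y' - y) by ring, cauchyPDF_even]
    simp_rw [heven]
    rw [← ofReal_integral_eq_lintegral_ofReal ((continuous_cauchyPDF h2t y).integrableOn_Ioc)
      (Filter.Eventually.of_forall fun y' => cauchyPDF_nonneg h2t _)]
    rw [integral_Ioc_cauchy h2t hL.le y]
  -- assemble
  rw [step2]
  simp_rw [step1]
  rw [swap1]
  simp_rw [step4, step5, step6]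
  rw [← ofReal_integral_eq_lintegral_ofReal ((continuous_Qf h2t L).integrableOn_Ioc)
    (Filter.Eventually.of_forall fun y => Qf_nonneg h2t hL.le y)]
  rw [ENNReal.toReal_ofReal]
  exact integral_nonneg fun y => Qf_nonneg h2t hL.le y

end Fubini

lemma hitProb_eq {t L : ℝ} (ht : 0 < t) (hL : 0 ≤ L) (a : ℝ) (j : ℤ) (ε : ℝ) :
    hitProb t a L j ε = Qf t L (a * ((j : ℝ) - ε)) := by
  unfold hitProb
  rw [intervalIntegral.integral_of_le hL]
  exact integral_Ioc_cauchy ht hL _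

lemma integrable_G {t L : ℝ} (ht : 0 < t) (hL : 0 ≤ L) :
    Integrable (fun u => Qf t L u * (1 - Qf t L u)) := by
  apply Integrable.mono' (integrable_Qf ht hL).1
  · exact (((continuous_Qf ht L).mul
      (continuous_const.sub (continuous_Qf ht L)))).aestronglyMeasurable
  · refine Filter.Eventually.of_forall fun u => ?_
    have h0 := Qf_nonneg ht hL u
    have h1 := Qf_le_one ht (L := L) u
    rw [Real.norm_eq_abs, abs_of_nonneg (by nlinarith)]
    nlinarith

lemma integrable_Qsq {t L : ℝ} (ht : 0 < t) (hL : 0 ≤ L) :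
    Integrable (fun u => Qf t L u ^ 2) := by
  apply Integrable.mono' (integrable_Qf ht hL).1
  · exact ((continuous_Qf ht L).pow 2).aestronglyMeasurable
  · refine Filter.Eventually.of_forall fun u => ?_
    have h0 := Qf_nonneg ht hL u
    have h1 := Qf_le_one ht (L := L) u
    rw [Real.norm_eq_abs, abs_of_nonneg (by positivity)]
    nlinarith

/-- the partition of ℝ into the intervals `(a(j-1), aj]` -/
lemma iUnion_Ioc_eq_univ {a : ℝ} (ha : 0 < a) :
    (⋃ j : ℤ, Ioc (a * ((j : ℝ) - 1)) (a * (j : ℝ))) = univ := by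
  ext x
  simp only [mem_iUnion, mem_Ioc, mem_univ, iff_true]
  refine ⟨⌈x / a⌉, ?_, ?_⟩
  · have h := Int.ceil_lt_add_one (x / a)
    have h2 : ((⌈x / a⌉ : ℝ) - 1) < x / a := by linarith
    calc a * ((⌈x / a⌉ : ℝ) - 1) < a * (x / a) := by
          exact mul_lt_mul_of_pos_left h2 ha
      _ = x := by field_simp
  · have h := Int.le_ceil (x / a)
    calc x = a * (x / a) := by field_simp
      _ ≤ a * (⌈x / a⌉ : ℝ) := mul_le_mul_of_nonneg_left h ha.le

lemma pairwise_disjoint_Ioc {a : ℝ} (ha : 0 < a) :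
    Pairwise (Function.onFun Disjoint fun j : ℤ => Ioc (a * ((j : ℝ) - 1)) (a * (j : ℝ))) := by
  intro i j hij
  have key : ∀ i j : ℤ, i < j →
      Disjoint (Ioc (a * ((i : ℝ) - 1)) (a * (i : ℝ)))
        (Ioc (a * ((j : ℝ) - 1)) (a * (j : ℝ))) := by
    intro i j h
    apply Set.Ioc_disjoint_Ioc.mpr
    have hij' : (i : ℝ) ≤ (j : ℝ) - 1 := by
      have : (i : ℝ) + 1 ≤ (j : ℝ) := by exact_mod_cast Int.lt_iff_add_one_le.mp h
      linarith
    calc min (a * (i : ℝ)) (a * (j : ℝ)) ≤ a * (i : ℝ) := min_le_left _ _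
      _ ≤ a * ((j : ℝ) - 1) := mul_le_mul_of_nonneg_left hij' ha.le
      _ ≤ max (a * ((i : ℝ) - 1)) (a * ((j : ℝ) - 1)) := le_max_right _ _
  rcases lt_or_gt_of_ne hij with h | h
  · exact key i j h
  · exact (key j i h).symm

/-- Part 1 of the theorem -/
lemma part1 {a t L : ℝ} (ha : 0 < a) (ht : 0 < t) (hL : 0 < L) :
    (∑' j : ℤ, ∫ ε in (0:ℝ)..1, hitProb t a L j ε * (1 - hitProb t a L j ε)) =
      (L / a) * (1 - (2 / Real.pi) * Real.arctan (L / (2 * t))) +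
        (2 * t / (a * Real.pi)) * Real.log (1 + (L / (2 * t)) ^ 2) := by
  have hπ := Real.pi_pos
  have h2t : 0 < 2 * t := by linarith
  set G : ℝ → ℝ := fun u => Qf t L u * (1 - Qf t L u) with hG
  -- each term via change of variables
  have hterm : ∀ j : ℤ, (∫ ε in (0:ℝ)..1, hitProb t a L j ε * (1 - hitProb t a L j ε))
      = a⁻¹ * ∫ u in Ioc (a * ((j : ℝ) - 1)) (a * (j : ℝ)), G u := by
    intro j
    have h1 : ∀ ε : ℝ, hitProb t a L j ε * (1 - hitProb t a L j ε)
        = G (a * (j : ℝ) - a * ε) := by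
      intro ε
      rw [hitProb_eq ht hL.le a j ε, hG]
      simp only [mul_sub]
    simp_rw [h1]
    rw [intervalIntegral.integral_comp_sub_mul G ha.ne' (a * (j : ℝ))]
    rw [show a * (j : ℝ) - a * 1 = a * ((j : ℝ) - 1) by ring,
        show a * (j : ℝ) - a * 0 = a * (j : ℝ) by ring]
    rw [intervalIntegral.integral_of_le
      (mul_le_mul_of_nonneg_left (by linarith) ha.le), smul_eq_mul]
  -- sum over the partition
  have hsum : HasSum (fun j : ℤ => ∫ u in Ioc (a * ((j : ℝ) - 1)) (a * (j : ℝ)), G u)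
      (∫ u, G u) := by
    have h := hasSum_integral_iUnion (μ := volume)
      (s := fun j : ℤ => Ioc (a * ((j : ℝ) - 1)) (a * (j : ℝ)))
      (fun j => measurableSet_Ioc) (pairwise_disjoint_Ioc ha)
      (by rw [iUnion_Ioc_eq_univ ha]; exact (integrable_G ht hL.le).integrableOn)
    rwa [iUnion_Ioc_eq_univ ha, Measure.restrict_univ] at h
  -- compute the total integral
  have hQint := integrable_Qf ht hL.le
  have hval : ∫ u, G u = L - ∫ y in Ioc (0:ℝ) L, Qf (2 * t) L y := by
    have hGeq : ∀ u : ℝ, G u = Qf t L u - Qf t L u ^ 2 := by intro u; rw [hG]; ring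
    simp_rw [hGeq]
    rw [integral_sub hQint.1 (integrable_Qsq ht hL.le), hQint.2, integral_Qf_sq ht hL]
  -- compute the double kernel integral
  have hiv : ∫ y in Ioc (0:ℝ) L, Qf (2 * t) L y = 2 * Wa (2 * t) L / π := by
    rw [← intervalIntegral.integral_of_le hL.le]
    have e1 : ∀ y : ℝ, Qf (2 * t) L y
        = (arctan ((L - y) / (2 * t)) + arctan (y / (2 * t))) / π := fun y => rfl
    simp_rw [e1]
    have c1 : Continuous fun y : ℝ => arctan ((L - y) / (2 * t)) := by
      exact Real.continuous_arctan.comp (by fun_prop)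
    have c2 : Continuous fun y : ℝ => arctan (y / (2 * t)) := by
      exact Real.continuous_arctan.comp (by fun_prop)
    have i1 : ∫ y in (0:ℝ)..L, arctan (y / (2 * t)) = Wa (2 * t) L := by
      rw [intervalIntegral.integral_eq_sub_of_hasDerivAt
        (f := Wa (2 * t)) (fun x _ => hasDerivAt_Wa h2t x) (c2.intervalIntegrable 0 L)]
      have : Wa (2 * t) 0 = 0 := by unfold Wa; simp
      rw [this, sub_zero]
    have i2 : ∫ y in (0:ℝ)..L, arctan ((L - y) / (2 * t)) = Wa (2 * t) L := by
      have := intervalIntegral.integral_comp_sub_left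
        (a := (0:ℝ)) (b := L) (fun x => arctan (x / (2 * t))) L
      rw [this]
      rw [show L - L = (0:ℝ) by ring, show L - 0 = L by ring]
      exact i1
    rw [show (fun y => (arctan ((L - y) / (2 * t)) + arctan (y / (2 * t))) / π)
        = fun y => (arctan ((L - y) / (2 * t)) + arctan (y / (2 * t))) * π⁻¹ by
      funext y; rw [div_eq_mul_inv]]
    rw [intervalIntegral.integral_mul_const, intervalIntegral.integral_add
      (c1.intervalIntegrable 0 L) (c2.intervalIntegrable 0 L), i1, i2]
    ring
  -- assemble
  calc (∑' j : ℤ, ∫ ε in (0:ℝ)..1, hitProb t a L j ε * (1 - hitProb t a L j ε))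
      = ∑' j : ℤ, a⁻¹ * ∫ u in Ioc (a * ((j : ℝ) - 1)) (a * (j : ℝ)), G u := by
        exact tsum_congr hterm
    _ = a⁻¹ * ∑' j : ℤ, ∫ u in Ioc (a * ((j : ℝ) - 1)) (a * (j : ℝ)), G u := tsum_mul_left
    _ = a⁻¹ * ∫ u, G u := by rw [hsum.tsum_eq]
    _ = a⁻¹ * (L - 2 * Wa (2 * t) L / π) := by rw [hval, hiv]
    _ = (L / a) * (1 - (2 / Real.pi) * Real.arctan (L / (2 * t))) +
        (2 * t / (a * Real.pi)) * Real.log (1 + (L / (2 * t)) ^ 2) := by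
      unfold Wa
      field_simp
      ring

lemma part2 {a t : ℝ} (ha : 0 < a) (ht : 0 < t) :
    Tendsto (fun L : ℝ =>
        ((L / a) * (1 - (2 / Real.pi) * Real.arctan (L / (2 * t))) +
          (2 * t / (a * Real.pi)) * Real.log (1 + (L / (2 * t)) ^ 2)) / Real.log L)
      atTop (nhds (4 * t / (a * Real.pi))) := by
  have hπ := Real.pi_pos
  have h2t : 0 < 2 * t := by linarith
  -- Part A
  have hT1 : Tendsto (fun L : ℝ => (L / a) * (1 - (2 / π) * arctan (L / (2 * t)))) atTop
      (nhds (4 * t / (a * π))) := by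
    have hbase : Tendsto (fun L : ℝ => (2 / (a * π)) * (L * arctan (2 * t / L))) atTop
        (nhds ((2 / (a * π)) * (2 * t))) :=
      (tendsto_mul_arctan_atTop (2 * t)).const_mul _
    have hbase' : Tendsto (fun L : ℝ => (2 / (a * π)) * (L * arctan (2 * t / L))) atTop
        (nhds (4 * t / (a * π))) := by
      convert hbase using 2
      field_simp
      ring
    apply hbase'.congr'
    filter_upwards [eventually_gt_atTop 0] with L hL
    have harc := Real.arctan_inv_of_pos (show 0 < L / (2 * t) by positivity)
    rw [show (L / (2 * t))⁻¹ = 2 * t / L by rw [inv_div]] at harc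
    rw [harc]
    field_simp
  have hA : Tendsto (fun L : ℝ => (L / a) * (1 - (2 / π) * arctan (L / (2 * t))) / log L) atTop
      (nhds 0) := hT1.div_atTop Real.tendsto_log_atTop
  -- Part B
  have hc : Tendsto (fun L : ℝ => (1 + (L / (2 * t)) ^ 2) / L ^ 2) atTop
      (nhds (1 / (4 * t ^ 2))) := by
    have h0 : Tendsto (fun L : ℝ => L⁻¹ * L⁻¹ + 1 / (4 * t ^ 2)) atTop
        (nhds (0 * 0 + 1 / (4 * t ^ 2))) :=
      (tendsto_inv_atTop_zero.mul tendsto_inv_atTop_zero).add tendsto_const_nhds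
    rw [show (0:ℝ) * 0 + 1 / (4 * t ^ 2) = 1 / (4 * t ^ 2) by ring] at h0
    apply h0.congr'
    filter_upwards [eventually_gt_atTop 0] with L hL
    field_simp
    ring
  have hlogc : Tendsto (fun L : ℝ => log ((1 + (L / (2 * t)) ^ 2) / L ^ 2)) atTop
      (nhds (log (1 / (4 * t ^ 2)))) := by
    have hne : (1 : ℝ) / (4 * t ^ 2) ≠ 0 := by positivity
    exact ((Real.continuousAt_log hne).tendsto.comp hc)
  have hB : Tendsto (fun L : ℝ => (2 * t / (a * π)) * log (1 + (L / (2 * t)) ^ 2) / log L) atTop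
      (nhds (4 * t / (a * π))) := by
    have hbase : Tendsto (fun L : ℝ => (2 * t / (a * π))
        * (2 + log ((1 + (L / (2 * t)) ^ 2) / L ^ 2) / log L)) atTop
        (nhds ((2 * t / (a * π)) * (2 + 0))) :=
      (tendsto_const_nhds.add (hlogc.div_atTop Real.tendsto_log_atTop)).const_mul _
    rw [show (2 * t / (a * π)) * (2 + 0) = 4 * t / (a * π) by ring] at hbase
    apply hbase.congr'
    filter_upwards [eventually_gt_atTop 1] with L hL
    have hL0 : (0:ℝ) < L := by linarith
    have hlogL : 0 < log L := Real.log_pos hL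
    have hx : (0:ℝ) < 1 + (L / (2 * t)) ^ 2 := by positivity
    have hsplit : log (1 + (L / (2 * t)) ^ 2)
        = 2 * log L + log ((1 + (L / (2 * t)) ^ 2) / L ^ 2) := by
      rw [Real.log_div hx.ne' (by positivity)]
      rw [Real.log_pow]
      push_cast
      ring
    rw [hsplit]
    field_simp
  have := hA.add hB
  rw [zero_add] at this
  apply this.congr
  intro L
  rw [add_div]

theorem cauchy_numVar (a t : ℝ) (ha : 0 < a) (ht : 0 < t) :
    (∀ L : ℝ, 0 < L →
      (∑' j : ℤ, ∫ ε in (0:ℝ)..1, hitProb t a L j ε * (1 - hitProb t a L j ε)) =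
        (L / a) * (1 - (2 / Real.pi) * Real.arctan (L / (2 * t))) +
          (2 * t / (a * Real.pi)) * Real.log (1 + (L / (2 * t)) ^ 2)) ∧
    Tendsto (fun L : ℝ =>
        ((L / a) * (1 - (2 / Real.pi) * Real.arctan (L / (2 * t))) +
          (2 * t / (a * Real.pi)) * Real.log (1 + (L / (2 * t)) ^ 2)) / Real.log L)
      atTop (nhds (4 * t / (a * Real.pi))) :=
  ⟨fun L hL => part1 ha ht hL, part2 ha ht⟩
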